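/- Fix β ≤ 1 and τ ∈ ℝ. Define for p ∈ (0,1): ν(p) = (p^{β-1}e^τ − (1-p)^{β-1})/(p^β e^τ + (1-p)^β). Then ν is monotone non-increasing in p on (0,1). -/

import Mathlib

open Real

private lemma betting_ratio_hasDerivAt (β τ : ℝ) {p : ℝ} (hp : 0 < p) (hq : p < 1) :
    HasDerivAt
      (fun p : ℝ =>
        (p ^ (β - 1) * Real.exp τ - (1 - p) ^ (β - 1))
          / (p ^ β * Real.exp τ + (1 - p) ^ β))
      ((((β - 1) * p ^ (β - 2) * Real.exp τ + (β - 1) * (1 - p) ^ (β - 2)) *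
          (p ^ β * Real.exp τ + (1 - p) ^ β) -
        (p ^ (β - 1) * Real.exp τ - (1 - p) ^ (β - 1)) *
          (β * p ^ (β - 1) * Real.exp τ - β * (1 - p) ^ (β - 1))) /
        (p ^ β * Real.exp τ + (1 - p) ^ β) ^ 2) p := by
  have hq' : 0 < 1 - p := by linarith
  have hD : 0 < p ^ β * Real.exp τ + (1 - p) ^ β := by positivity
  have hlin : HasDerivAt (fun x : ℝ => 1 - x) (-1) p := by
    simpa using (hasDerivAt_id p).const_sub 1
  have h1 : HasDerivAt (fun x : ℝ => x ^ (β - 1)) ((β - 1) * p ^ (β - 1 - 1)) p :=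
    Real.hasDerivAt_rpow_const (Or.inl hp.ne')
  have h2 : HasDerivAt (fun x : ℝ => (1 - x) ^ (β - 1))
      ((-1) * (β - 1) * (1 - p) ^ (β - 1 - 1)) p := hlin.rpow_const (Or.inl hq'.ne')
  have h3 : HasDerivAt (fun x : ℝ => x ^ β) (β * p ^ (β - 1)) p :=
    Real.hasDerivAt_rpow_const (Or.inl hp.ne')
  have h4 : HasDerivAt (fun x : ℝ => (1 - x) ^ β) ((-1) * β * (1 - p) ^ (β - 1)) p :=
    hlin.rpow_const (Or.inl hq'.ne')
  have hN := (h1.mul_const (Real.exp τ)).sub h2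
  have hDd := (h3.mul_const (Real.exp τ)).add h4
  have := hN.div hDd hD.ne'
  convert this using 1
  case e'_4 => rfl
  case e'_5 => rfl
  case e'_8 => rfl
  rw [show β - 1 - 1 = β - 2 by ring]
  simp only [Pi.add_apply, Pi.sub_apply]
  ring

theorem betting_ratio_antitone (β τ : ℝ) (hβ : β ≤ 1) :
    AntitoneOn
      (fun p : ℝ =>
        (p ^ (β - 1) * Real.exp τ - (1 - p) ^ (β - 1))
          / (p ^ β * Real.exp τ + (1 - p) ^ β))
      (Set.Ioo (0:ℝ) 1) := by
  apply antitoneOn_of_deriv_nonpos (convex_Ioo 0 1)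
  · intro p hp
    exact (betting_ratio_hasDerivAt β τ hp.1 hp.2).continuousAt.continuousWithinAt
  · rw [interior_Ioo]
    intro p hp
    exact (betting_ratio_hasDerivAt β τ hp.1 hp.2).differentiableAt.differentiableWithinAt
  · rw [interior_Ioo]
    intro p hp
    rw [(betting_ratio_hasDerivAt β τ hp.1 hp.2).deriv]
    apply div_nonpos_of_nonpos_of_nonneg _ (sq_nonneg _)
    have hp0 : (0:ℝ) < p := hp.1
    have hq' : 0 < 1 - p := by linarith [hp.2]
    have hE : 0 < Real.exp τ := Real.exp_pos τ
    have hc : 0 < p ^ (β - 2) := Real.rpow_pos_of_pos hp0 _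
    have hd : 0 < (1 - p) ^ (β - 2) := Real.rpow_pos_of_pos hq' _
    have e1 : p ^ (β - 1) = p ^ (β - 2) * p := by
      rw [show β - 1 = (β - 2) + 1 by ring, Real.rpow_add_one hp0.ne']
    have e2 : p ^ β = p ^ (β - 2) * p * p := by
      nth_rewrite 1 [show β = (β - 2) + 1 + 1 by ring]; rw [Real.rpow_add_one hp0.ne',
        Real.rpow_add_one hp0.ne']
    have e3 : (1 - p) ^ (β - 1) = (1 - p) ^ (β - 2) * (1 - p) := by
      rw [show β - 1 = (β - 2) + 1 by ring, Real.rpow_add_one hq'.ne']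
    have e4 : (1 - p) ^ β = (1 - p) ^ (β - 2) * (1 - p) * (1 - p) := by
      nth_rewrite 1 [show β = (β - 2) + 1 + 1 by ring]; rw [Real.rpow_add_one hq'.ne',
        Real.rpow_add_one hq'.ne']
    rw [e1, e2, e3, e4]
    set c := p ^ (β - 2)
    set d := (1 - p) ^ (β - 2)
    set E := Real.exp τ
    nlinarith [sq_nonneg (c * p * E - d * (1 - p)), mul_pos (mul_pos hc hd) hE,
      mul_nonneg (mul_nonneg (mul_pos (mul_pos hc hd) hE).le (sub_nonneg.2 hβ)) (sq_nonneg 1)]
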